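/- Suppose η > α/(βd) and that the scaling kernel G satisfies ‖G(1,·)‖_{L^q(ℝ^d)} < ∞ for every q ∈ [1,∞]. Then there exist a bounded, compactly supported, measurable V₀ : ℝ^d → [0,∞) which is not almost everywhere zero, and a measurable V : (0,∞) × ℝ^d → [0,∞) such that for every t > 0 one has V(t,x) = ∫_{ℝ^d} G(t,x−y)V₀(y) dy + ∫₀^t ∫_{ℝ^d} G(t−s,x−y) V(s,y)^{1+η} dy ds for almost every x ∈ ℝ^d, and moreover ‖V(t,·)‖_{L^∞(ℝ^d)} < ∞ for every t > 0. -/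

import Mathlib

open MeasureTheory ENNReal

set_option maxHeartbeats 2000000

noncomputable section GlobalSolAux

open Set Function Filter

/-- supremum commutes with rpow along monotone sequences. -/
lemma ennreal_iSup_rpow (u : ℕ → ℝ≥0∞) (hu : Monotone u) {p : ℝ} (hp : 0 < p) :
    (⨆ n, u n ^ p) = (⨆ n, u n) ^ p := by
  refine tendsto_nhds_unique
    (tendsto_atTop_iSup (fun a b hab => ENNReal.rpow_le_rpow (hu hab) hp.le)) ?_
  exact (ENNReal.continuous_rpow_const.tendsto _).comp (tendsto_atTop_iSup hu)

lemma ennreal_rpow_one_add_le {a b : ℝ≥0∞} {η : ℝ} (hη : 0 ≤ η) (hab : a ≤ b) :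
    a ^ (1 + η) ≤ b ^ η * a := by
  rw [add_comm, ENNReal.rpow_add_of_nonneg _ _ hη zero_le_one, ENNReal.rpow_one]
  exact mul_le_mul' (ENNReal.rpow_le_rpow hab hη) le_rfl

lemma real_min_one_rpow {a p : ℝ} (ha : 0 ≤ a) (hp : 0 ≤ p) :
    (min 1 a) ^ p = min 1 (a ^ p) := by
  rcases le_total a 1 with h | h
  · rw [min_eq_right h, min_eq_right (Real.rpow_le_one ha h hp)]
  · rw [min_eq_left h, Real.one_rpow, min_eq_left (Real.one_le_rpow h hp)]

lemma ennreal_three_quarters (a : ℝ≥0∞) : a / 4 + a / 4 + a / 4 ≤ a := by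
  rw [ENNReal.div_add_div_same, ENNReal.div_add_div_same]
  refine ENNReal.div_le_of_le_mul ?_
  calc a + a + a = a * 3 := by ring
    _ ≤ a * 4 := by gcongr <;> norm_num

variable {d : ℕ}

/-- The Picard iterates for the mild formulation, with values in `ℝ≥0∞`. -/
noncomputable def picardIt (d : ℕ) (K : ℝ → EuclideanSpace ℝ (Fin d) → ℝ≥0∞) (η : ℝ)
    (U : EuclideanSpace ℝ (Fin d) → ℝ≥0∞) : ℕ → ℝ → EuclideanSpace ℝ (Fin d) → ℝ≥0∞
  | 0 => fun _ _ => 0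
  | n + 1 => fun t x =>
      (∫⁻ y, K t (x - y) * U y) +
        ∫⁻ s in Set.Ioo (0 : ℝ) t, ∫⁻ y, K (t - s) (x - y) * picardIt d K η U n s y ^ (1 + η)

lemma picardIt_succ (K : ℝ → EuclideanSpace ℝ (Fin d) → ℝ≥0∞) (η : ℝ)
    (U : EuclideanSpace ℝ (Fin d) → ℝ≥0∞) (n : ℕ) (t : ℝ) (x : EuclideanSpace ℝ (Fin d)) :
    picardIt d K η U (n + 1) t x =
      (∫⁻ y, K t (x - y) * U y) +
        ∫⁻ s in Set.Ioo (0 : ℝ) t, ∫⁻ y, K (t - s) (x - y) * picardIt d K η U n s y ^ (1 + η) :=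
  rfl

lemma measurable_picardIt {K : ℝ → EuclideanSpace ℝ (Fin d) → ℝ≥0∞}
    (hK : Measurable (Function.uncurry K)) {η : ℝ}
    {U : EuclideanSpace ℝ (Fin d) → ℝ≥0∞} (hU : Measurable U) (n : ℕ) :
    Measurable (Function.uncurry (picardIt d K η U n)) := by
  induction n with
  | zero => exact measurable_const
  | succ n IH =>
    have hlin : Measurable fun p : ℝ × EuclideanSpace ℝ (Fin d) =>
        ∫⁻ y, K p.1 (p.2 - y) * U y := by
      apply Measurable.lintegral_prod_right'
        (f := fun q : (ℝ × EuclideanSpace ℝ (Fin d)) × EuclideanSpace ℝ (Fin d) =>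
          K q.1.1 (q.1.2 - q.2) * U q.2)
      exact (hK.comp ((measurable_fst.fst).prodMk
        ((measurable_fst.snd).sub measurable_snd))).mul (hU.comp measurable_snd)
    have hinner : Measurable fun q : (ℝ × EuclideanSpace ℝ (Fin d)) × ℝ =>
        ∫⁻ y, K (q.1.1 - q.2) (q.1.2 - y) * picardIt d K η U n q.2 y ^ (1 + η) := by
      apply Measurable.lintegral_prod_right'
        (f := fun r : ((ℝ × EuclideanSpace ℝ (Fin d)) × ℝ) × EuclideanSpace ℝ (Fin d) =>
          K (r.1.1.1 - r.1.2) (r.1.1.2 - r.2) * picardIt d K η U n r.1.2 r.2 ^ (1 + η))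
      refine (hK.comp (((measurable_fst.fst.fst).sub measurable_fst.snd).prodMk
        ((measurable_fst.fst.snd).sub measurable_snd))).mul ?_
      exact (ENNReal.continuous_rpow_const.measurable).comp
        (IH.comp ((measurable_fst.snd).prodMk measurable_snd))
    have hS : MeasurableSet {q : (ℝ × EuclideanSpace ℝ (Fin d)) × ℝ | q.2 ∈ Set.Ioo 0 q.1.1} := by
      have : {q : (ℝ × EuclideanSpace ℝ (Fin d)) × ℝ | q.2 ∈ Set.Ioo 0 q.1.1}
          = {q : (ℝ × EuclideanSpace ℝ (Fin d)) × ℝ | (0:ℝ) < q.2}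
            ∩ {q : (ℝ × EuclideanSpace ℝ (Fin d)) × ℝ | q.2 < q.1.1} := rfl
      rw [this]
      exact (measurableSet_lt measurable_const measurable_snd).inter
        (measurableSet_lt measurable_snd measurable_fst.fst)
    have hduh : Measurable fun p : ℝ × EuclideanSpace ℝ (Fin d) =>
        ∫⁻ s in Set.Ioo (0:ℝ) p.1,
          ∫⁻ y, K (p.1 - s) (p.2 - y) * picardIt d K η U n s y ^ (1 + η) := by
      have h1 : Measurable fun p : ℝ × EuclideanSpace ℝ (Fin d) =>
          ∫⁻ s, ({q : (ℝ × EuclideanSpace ℝ (Fin d)) × ℝ | q.2 ∈ Set.Ioo 0 q.1.1}.indicator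
            (fun q => ∫⁻ y, K (q.1.1 - q.2) (q.1.2 - y) * picardIt d K η U n q.2 y ^ (1 + η))
            (p, s)) :=
        Measurable.lintegral_prod_right' (hinner.indicator hS)
      have heq : (fun p : ℝ × EuclideanSpace ℝ (Fin d) =>
          ∫⁻ s in Set.Ioo (0:ℝ) p.1,
            ∫⁻ y, K (p.1 - s) (p.2 - y) * picardIt d K η U n s y ^ (1 + η))
          = fun p : ℝ × EuclideanSpace ℝ (Fin d) =>
          ∫⁻ s, ({q : (ℝ × EuclideanSpace ℝ (Fin d)) × ℝ | q.2 ∈ Set.Ioo 0 q.1.1}.indicator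
            (fun q => ∫⁻ y, K (q.1.1 - q.2) (q.1.2 - y) * picardIt d K η U n q.2 y ^ (1 + η))
            (p, s)) := by
        funext p
        rw [← lintegral_indicator measurableSet_Ioo]
        refine lintegral_congr fun s => ?_
        by_cases h : s ∈ Set.Ioo (0:ℝ) p.1
        · rw [Set.indicator_of_mem h, Set.indicator_of_mem (show (p,s) ∈
            {q : (ℝ × EuclideanSpace ℝ (Fin d)) × ℝ | q.2 ∈ Set.Ioo 0 q.1.1} from h)]
        · rw [Set.indicator_of_notMem h, Set.indicator_of_notMem (show (p,s) ∉
            {q : (ℝ × EuclideanSpace ℝ (Fin d)) × ℝ | q.2 ∈ Set.Ioo 0 q.1.1} from h)]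
      rw [heq]
      exact h1
    exact (hlin.add hduh : Measurable fun p : ℝ × EuclideanSpace ℝ (Fin d) =>
      (∫⁻ y, K p.1 (p.2 - y) * U y) +
        ∫⁻ s in Set.Ioo (0:ℝ) p.1,
          ∫⁻ y, K (p.1 - s) (p.2 - y) * picardIt d K η U n s y ^ (1 + η))

lemma picardIt_mono_succ (K : ℝ → EuclideanSpace ℝ (Fin d) → ℝ≥0∞) {η : ℝ} (hη : 0 ≤ 1 + η)
    (U : EuclideanSpace ℝ (Fin d) → ℝ≥0∞) :
    ∀ n t x, picardIt d K η U n t x ≤ picardIt d K η U (n + 1) t x := by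
  intro n
  induction n with
  | zero => exact fun t x => zero_le
  | succ n IH =>
    intro t x
    rw [picardIt_succ, picardIt_succ]
    refine add_le_add le_rfl (lintegral_mono fun s => lintegral_mono fun y => ?_)
    exact mul_le_mul' le_rfl (ENNReal.rpow_le_rpow (IH s y) hη)

lemma picardIt_mono (K : ℝ → EuclideanSpace ℝ (Fin d) → ℝ≥0∞) {η : ℝ} (hη : 0 ≤ 1 + η)
    (U : EuclideanSpace ℝ (Fin d) → ℝ≥0∞) {m n : ℕ} (hmn : m ≤ n) (t : ℝ)
    (x : EuclideanSpace ℝ (Fin d)) :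
    picardIt d K η U m t x ≤ picardIt d K η U n t x := by
  induction n with
  | zero => rw [Nat.le_zero.mp hmn]
  | succ n IH =>
    rcases Nat.lt_or_ge m (n+1) with h | h
    · exact (IH (Nat.lt_succ_iff.mp h)).trans (picardIt_mono_succ K hη U n t x)
    · rw [Nat.le_antisymm hmn h]

/-- The fixed-point property of the supremum of the Picard iterates. -/
lemma picardIt_iSup_eq {K : ℝ → EuclideanSpace ℝ (Fin d) → ℝ≥0∞}
    (hK : Measurable (Function.uncurry K)) {η : ℝ} (hη : 0 < η)
    {U : EuclideanSpace ℝ (Fin d) → ℝ≥0∞} (hU : Measurable U) (t : ℝ)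
    (x : EuclideanSpace ℝ (Fin d)) :
    (⨆ n, picardIt d K η U n t x) =
      (∫⁻ y, K t (x - y) * U y) +
        ∫⁻ s in Set.Ioo (0 : ℝ) t,
          ∫⁻ y, K (t - s) (x - y) * (⨆ n, picardIt d K η U n s y) ^ (1 + η) := by
  have hη1 : (0:ℝ) ≤ 1 + η := by linarith
  have hKsec : ∀ u : ℝ, Measurable (K u) := fun u => hK.comp measurable_prodMk_left
  have hPn : ∀ n, Measurable (Function.uncurry (picardIt d K η U n)) :=
    measurable_picardIt hK hU
  have step1 : (⨆ n, picardIt d K η U n t x) = ⨆ n, picardIt d K η U (n+1) t x := by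
    apply le_antisymm
    · exact iSup_le fun n => (picardIt_mono_succ K hη1 U n t x).trans
        (le_iSup (fun n => picardIt d K η U (n+1) t x) n)
    · exact iSup_le fun n => le_iSup (fun n => picardIt d K η U n t x) (n+1)
  rw [step1]
  simp only [picardIt_succ]
  rw [← ENNReal.add_iSup]
  congr 1
  -- swap sup with the s-integral
  have hmeas_s : ∀ n, Measurable fun s =>
      ∫⁻ y, K (t - s) (x - y) * picardIt d K η U n s y ^ (1 + η) := by
    intro n
    apply Measurable.lintegral_prod_right'
      (f := fun q : ℝ × EuclideanSpace ℝ (Fin d) =>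
        K (t - q.1) (x - q.2) * picardIt d K η U n q.1 q.2 ^ (1 + η))
    refine (hK.comp (((measurable_const.sub measurable_fst)).prodMk
      (measurable_const.sub measurable_snd))).mul ?_
    exact (ENNReal.continuous_rpow_const.measurable).comp (hPn n)
  have swap1 := lintegral_iSup (μ := volume.restrict (Set.Ioo (0:ℝ) t))
      (f := fun n s => ∫⁻ y, K (t - s) (x - y) * picardIt d K η U n s y ^ (1 + η))
      hmeas_s (fun a b hab s => lintegral_mono fun y =>
        mul_le_mul' le_rfl (ENNReal.rpow_le_rpow (picardIt_mono K hη1 U hab s y) hη1))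
  rw [← swap1]
  refine lintegral_congr fun s => ?_
  have hmeas_y : ∀ n, Measurable fun y =>
      K (t - s) (x - y) * picardIt d K η U n s y ^ (1 + η) := by
    intro n
    refine ((hKsec (t - s)).comp (measurable_const.sub measurable_id)).mul ?_
    exact (ENNReal.continuous_rpow_const.measurable).comp
      ((hPn n).comp measurable_prodMk_left)
  have swap2 := lintegral_iSup (μ := (volume : Measure (EuclideanSpace ℝ (Fin d))))
      (f := fun n y => K (t - s) (x - y) * picardIt d K η U n s y ^ (1 + η))
      hmeas_y (fun a b hab y => mul_le_mul' le_rfl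
        (ENNReal.rpow_le_rpow (picardIt_mono K hη1 U hab s y) hη1))
  rw [← swap2]
  refine lintegral_congr fun y => ?_
  rw [← ENNReal.mul_iSup]
  congr 1
  exact ennreal_iSup_rpow _ (fun a b hab => picardIt_mono K hη1 U hab s y) (by linarith)

end GlobalSolAux

/-- Theorem 1.2. If `η > α/(βd)` and the scaling kernel `G` satisfies
`‖G(1,·)‖_{L^q} < ∞` for every `q ∈ [1,∞]`, then there is a bounded, compactly
supported, non-trivial nonnegative initial datum `V₀` for which a global mild solution
`V` exists, with `‖V(t,·)‖_{L^∞} < ∞` for every `t > 0`. -/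
theorem global_solution_supercritical
    (d : ℕ) (hd : 1 ≤ d) (α β η : ℝ)
    (hα : α ∈ Set.Ioo (0 : ℝ) 2) (hβ : β ∈ Set.Ioo (0 : ℝ) 1)
    (hη : α / (β * d) < η)
    (G : ℝ → EuclideanSpace ℝ (Fin d) → ℝ)
    (hGmeas : Measurable (Function.uncurry G))
    (hGnonneg : ∀ t x, 0 ≤ G t x)
    (hGscal : ∀ s t : ℝ, 0 < s → 0 < t → ∀ x : EuclideanSpace ℝ (Fin d),
      G (s * t) x = s ^ (-(β * d) / α) * G t ((s ^ (-(β / α))) • x))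
    (hGLq : ∀ q : ℝ≥0∞, 1 ≤ q → eLpNorm (G 1) q volume ≠ ∞) :
    ∃ V₀ : EuclideanSpace ℝ (Fin d) → ℝ,
      Measurable V₀ ∧ (∀ x, 0 ≤ V₀ x) ∧ (∃ B : ℝ, ∀ x, V₀ x ≤ B) ∧
      HasCompactSupport V₀ ∧ ¬ (V₀ =ᵐ[volume] 0) ∧
      ∃ V : ℝ → EuclideanSpace ℝ (Fin d) → ℝ,
        Measurable (Function.uncurry V) ∧ (∀ t x, 0 ≤ V t x) ∧
        (∀ t : ℝ, 0 < t → ∀ᵐ x : EuclideanSpace ℝ (Fin d) ∂volume,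
          ENNReal.ofReal (V t x)
            = (∫⁻ y, ENNReal.ofReal (G t (x - y)) * ENNReal.ofReal (V₀ y))
              + ∫⁻ s in Set.Ioo (0 : ℝ) t,
                  ∫⁻ y, ENNReal.ofReal (G (t - s) (x - y))
                    * ENNReal.ofReal (V s y) ^ (1 + η)) ∧
        (∀ t : ℝ, 0 < t → eLpNorm (V t) ∞ volume ≠ ∞) := by
  obtain ⟨hα0, hα2⟩ := hα
  obtain ⟨hβ0, hβ1⟩ := hβ
  have hd0 : (0:ℝ) < d := by exact_mod_cast hd
  have hη0 : 0 < η := lt_trans (div_pos hα0 (mul_pos hβ0 hd0)) hη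
  have hη1 : (0:ℝ) ≤ 1 + η := by linarith
  set γ : ℝ := β * d / α with hγdef
  have hγ0 : 0 < γ := div_pos (mul_pos hβ0 hd0) hα0
  have hγη : 1 < γ * η := by
    have h1 : γ * (α / (β * d)) = 1 := by
      rw [hγdef]
      field_simp
    calc (1:ℝ) = γ * (α / (β * d)) := h1.symm
      _ < γ * η := by
        exact mul_lt_mul_of_pos_left hη hγ0
  -- the kernel in ℝ≥0∞
  set K : ℝ → EuclideanSpace ℝ (Fin d) → ℝ≥0∞ := fun u z => ENNReal.ofReal (G u z) with hKdef
  have hK : Measurable (Function.uncurry K) := ENNReal.measurable_ofReal.comp hGmeas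
  have hKsec : ∀ u : ℝ, Measurable (K u) := fun u => hK.comp measurable_prodMk_left
  -- mass and sup norm of the kernel
  set m : ℝ≥0∞ := ∫⁻ z, K 1 z with hmdef
  have hm_ne : m ≠ ∞ := by
    have h1 := hGLq 1 le_rfl
    rw [eLpNorm_one_eq_lintegral_enorm] at h1
    have h2 : m = ∫⁻ z, (‖G 1 z‖₊ : ℝ≥0∞) :=
      lintegral_congr fun z => (Real.enorm_eq_ofReal (hGnonneg 1 z)).symm
    rw [h2]; exact h1
  set M : ℝ≥0∞ := eLpNormEssSup (G 1) volume with hMdef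
  have hM_ne : M ≠ ∞ := by
    have := hGLq ⊤ le_top
    rwa [eLpNorm_exponent_top] at this
  have hM_ae : ∀ᵐ z : EuclideanSpace ℝ (Fin d), K 1 z ≤ M := by
    refine (ae_le_eLpNormEssSup (f := G 1)).mono fun z hz => ?_
    rw [hKdef]
    calc ENNReal.ofReal (G 1 z) = (‖G 1 z‖₊ : ℝ≥0∞) :=
          (Real.enorm_eq_ofReal (hGnonneg 1 z)).symm
      _ ≤ M := hz
  -- the scaling representation
  have hrepr : ∀ t : ℝ, 0 < t → ∀ z,
      K t z = ENNReal.ofReal (t ^ (-γ)) * K 1 (t ^ (-(β/α)) • z) := by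
    intro t ht z
    have h1 := hGscal t 1 ht one_pos z
    rw [mul_one] at h1
    have hexp : -(β * ↑d) / α = -γ := by rw [hγdef]; ring
    rw [hKdef]
    simp only
    rw [h1, hexp]
    exact ENNReal.ofReal_mul (Real.rpow_nonneg ht.le _)
  have hfr : Module.finrank ℝ (EuclideanSpace ℝ (Fin d)) = d := finrank_euclideanSpace_fin
  have hscale_int : ∀ (c : ℝ), c ≠ 0 → ∀ {f : EuclideanSpace ℝ (Fin d) → ℝ≥0∞}, Measurable f →
      ∫⁻ z, f (c • z) = ENNReal.ofReal |(c ^ d)⁻¹| * ∫⁻ z, f z := by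
    intro c hc f hf
    rw [← lintegral_map hf (measurable_const_smul c), Measure.map_addHaar_smul volume hc,
      lintegral_smul_measure, hfr, smul_eq_mul]
  have hmass : ∀ t : ℝ, 0 < t → ∫⁻ z, K t z = m := by
    intro t ht
    have hc : t ^ (-(β/α)) ≠ 0 := (Real.rpow_pos_of_pos ht _).ne'
    have h1 : ((t ^ (-(β/α))) ^ d)⁻¹ = t ^ γ := by
      rw [← Real.rpow_natCast (t ^ (-(β/α))) d, ← Real.rpow_mul ht.le, ← Real.rpow_neg ht.le]
      congr 1
      rw [hγdef]; ring
    calc ∫⁻ z, K t z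
        = ∫⁻ z, ENNReal.ofReal (t ^ (-γ)) * K 1 (t ^ (-(β/α)) • z) :=
          lintegral_congr fun z => hrepr t ht z
      _ = ENNReal.ofReal (t ^ (-γ)) * ∫⁻ z, K 1 (t ^ (-(β/α)) • z) :=
          lintegral_const_mul' _ _ ENNReal.ofReal_ne_top
      _ = ENNReal.ofReal (t ^ (-γ)) * (ENNReal.ofReal |((t ^ (-(β/α))) ^ d)⁻¹| * m) := by
          rw [hscale_int _ hc (hKsec 1)]
      _ = m := by
          rw [h1, abs_of_pos (Real.rpow_pos_of_pos ht γ), ← mul_assoc,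
            ← ENNReal.ofReal_mul (Real.rpow_nonneg ht.le _), ← Real.rpow_add ht,
            neg_add_cancel, Real.rpow_zero, ENNReal.ofReal_one, one_mul]
  have hsup : ∀ t : ℝ, 0 < t →
      ∀ᵐ z : EuclideanSpace ℝ (Fin d), K t z ≤ ENNReal.ofReal (t ^ (-γ)) * M := by
    intro t ht
    have hc : t ^ (-(β/α)) ≠ 0 := (Real.rpow_pos_of_pos ht _).ne'
    have h2 : ∀ᵐ z : EuclideanSpace ℝ (Fin d), K 1 (t ^ (-(β/α)) • z) ≤ M :=
      (Measure.quasiMeasurePreserving_smul volume hc).tendsto_ae.eventually hM_ae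
    refine h2.mono fun z hz => ?_
    rw [hrepr t ht z]
    exact mul_le_mul' le_rfl hz
  -- translated versions
  have hKmass_shift : ∀ t : ℝ, 0 < t → ∀ x : EuclideanSpace ℝ (Fin d),
      ∫⁻ y, K t (x - y) = m := by
    intro t ht x
    rw [(Measure.measurePreserving_sub_left volume x).lintegral_comp (hKsec t)]
    exact hmass t ht
  have hKmass_shift' : ∀ t : ℝ, 0 < t → ∀ y : EuclideanSpace ℝ (Fin d),
      ∫⁻ x, K t (x - y) = m := by
    intro t ht y
    rw [(measurePreserving_sub_right volume y).lintegral_comp (hKsec t)]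
    exact hmass t ht
  have hsup_shift : ∀ t : ℝ, 0 < t → ∀ x : EuclideanSpace ℝ (Fin d),
      ∀ᵐ y : EuclideanSpace ℝ (Fin d), K t (x - y) ≤ ENNReal.ofReal (t ^ (-γ)) * M :=
    fun t ht x =>
      ((Measure.measurePreserving_sub_left volume x).quasiMeasurePreserving.tendsto_ae).eventually
        (hsup t ht)
  -- the tail integral
  set J : ℝ≥0∞ := ∫⁻ s in Set.Ioi (0:ℝ), ENNReal.ofReal (min 1 (s ^ (-(γ*η)))) with hJdef
  have hJ_ne : J ≠ ∞ := by
    have hsplit : Set.Ioi (0:ℝ) = Set.Ioc 0 1 ∪ Set.Ioi 1 :=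
      (Set.Ioc_union_Ioi_eq_Ioi zero_le_one).symm
    rw [hJdef, hsplit, lintegral_union measurableSet_Ioi Set.Ioc_disjoint_Ioi_same]
    have hp1 : (∫⁻ s in Set.Ioc (0:ℝ) 1, ENNReal.ofReal (min 1 (s ^ (-(γ*η))))) ≤ 1 := by
      calc (∫⁻ s in Set.Ioc (0:ℝ) 1, ENNReal.ofReal (min 1 (s ^ (-(γ*η)))))
          ≤ ∫⁻ _ in Set.Ioc (0:ℝ) 1, 1 :=
            setLIntegral_mono' measurableSet_Ioc fun s _ =>
              ENNReal.ofReal_le_one.mpr (min_le_left _ _)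
        _ = 1 * volume (Set.Ioc (0:ℝ) 1) := setLIntegral_const _ _
        _ = 1 := by simp
    have hp2 : (∫⁻ s in Set.Ioi (1:ℝ), ENNReal.ofReal (min 1 (s ^ (-(γ*η))))) < ∞ := by
      refine lt_of_le_of_lt ?_
        ((integrableOn_Ioi_rpow_of_lt (by linarith : -(γ*η) < -1) one_pos).setLIntegral_lt_top)
      exact setLIntegral_mono' measurableSet_Ioi fun s _ =>
        ENNReal.ofReal_le_ofReal (min_le_right _ _)
    exact (lt_of_le_of_lt (add_le_add hp1 le_rfl) (by
      rw [lt_top_iff_ne_top] at hp2 ⊢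
      exact ENNReal.add_ne_top.mpr ⟨one_ne_top, hp2⟩)).ne
  -- constants
  set mh : ℝ≥0∞ := m + 1 with hmhdef
  set Mh : ℝ≥0∞ := M + 1 with hMhdef
  set Jh : ℝ≥0∞ := J + 1 with hJhdef
  set c₂ : ℝ≥0∞ := ENNReal.ofReal (2 ^ (γ*(1+η))) with hc₂def
  have hc₂1 : 1 ≤ c₂ := by
    rw [hc₂def]
    exact ENNReal.one_le_ofReal.mpr (Real.one_le_rpow one_le_two (by positivity))
  set B : ℝ≥0∞ := mh + Mh + Jh + c₂ with hBdef
  have hmh_ne : mh ≠ ∞ := ENNReal.add_ne_top.mpr ⟨hm_ne, one_ne_top⟩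
  have hMh_ne : Mh ≠ ∞ := ENNReal.add_ne_top.mpr ⟨hM_ne, one_ne_top⟩
  have hJh_ne : Jh ≠ ∞ := ENNReal.add_ne_top.mpr ⟨hJ_ne, one_ne_top⟩
  have hc₂_ne : c₂ ≠ ∞ := ENNReal.ofReal_ne_top
  have hB_ne : B ≠ ∞ := by
    rw [hBdef]
    exact ENNReal.add_ne_top.mpr ⟨ENNReal.add_ne_top.mpr
      ⟨ENNReal.add_ne_top.mpr ⟨hmh_ne, hMh_ne⟩, hJh_ne⟩, hc₂_ne⟩
  have hB1 : 1 ≤ B := by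
    calc (1:ℝ≥0∞) ≤ c₂ := hc₂1
      _ ≤ B := le_add_self
  have hB0 : B ≠ 0 := by
    intro h
    rw [h] at hB1
    exact (not_le.mpr zero_lt_one) hB1
  have hmh_le : mh ≤ B := by
    rw [hBdef]; exact le_trans le_self_add (le_trans le_self_add le_self_add)
  have hMh_le : Mh ≤ B := by
    rw [hBdef]; exact le_trans le_add_self (le_trans le_self_add le_self_add)
  have hJh_le : Jh ≤ B := by
    rw [hBdef]; exact le_trans le_add_self le_self_add
  have hc₂_le : c₂ ≤ B := le_add_self
  have hB4_ne : B^4 ≠ ∞ := by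
    exact ENNReal.pow_ne_top hB_ne
  have hB4_0 : B^4 ≠ 0 := pow_ne_zero _ hB0
  -- the smallness parameter A
  set A : ℝ≥0∞ := ((16 * B^4)⁻¹) ^ η⁻¹ ⊓ 1 with hAdef
  have h16B_ne : (16 : ℝ≥0∞) * B^4 ≠ ∞ := ENNReal.mul_ne_top (by norm_num) hB4_ne
  have h16B_0 : (16 : ℝ≥0∞) * B^4 ≠ 0 := by
    simp only [ne_eq, mul_eq_zero, not_or]
    exact ⟨by norm_num, hB4_0⟩
  have hA1 : A ≤ 1 := min_le_right _ _
  have hA_ne : A ≠ ∞ := (lt_of_le_of_lt hA1 one_lt_top).ne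
  have hA0 : 0 < A := by
    refine lt_min ?_ zero_lt_one
    exact ENNReal.rpow_pos (ENNReal.inv_pos.mpr h16B_ne) (ENNReal.inv_ne_top.mpr h16B_0)
  have hAη_le1 : A ^ η ≤ 1 := by
    calc A ^ η ≤ 1 ^ η := ENNReal.rpow_le_rpow hA1 hη0.le
      _ = 1 := ENNReal.one_rpow η
  have hAη : A ^ η ≤ (16 * B^4)⁻¹ := by
    calc A ^ η ≤ (((16 * B^4)⁻¹) ^ η⁻¹) ^ η :=
          ENNReal.rpow_le_rpow (min_le_left _ _) hη0.le
      _ = (16 * B^4)⁻¹ := ENNReal.rpow_inv_rpow hη0.ne' _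
  have hmaster : ∀ k : ℝ≥0∞, k ≤ B^4 → k * A^η ≤ 16⁻¹ := by
    intro k hk
    calc k * A^η ≤ B^4 * (16 * B^4)⁻¹ := mul_le_mul' hk hAη
      _ = B^4 * (16⁻¹ * (B^4)⁻¹) := by
          rw [ENNReal.mul_inv (Or.inl (by norm_num)) (Or.inl (by norm_num))]
      _ = 16⁻¹ * (B^4 * (B^4)⁻¹) := by ring
      _ = 16⁻¹ := by rw [ENNReal.mul_inv_cancel hB4_0 hB4_ne, mul_one]
  have hApow : A ^ (1 + η) = A * A ^ η := by
    rw [ENNReal.rpow_add_of_nonneg 1 η zero_le_one hη0.le, ENNReal.rpow_one]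
  have hfac : ∀ k : ℝ≥0∞, k ≤ B^4 → k * A^(1+η) ≤ A/4 := by
    intro k hk
    rw [hApow]
    calc k * (A * A^η) = (k * A^η) * A := by ring
      _ ≤ 16⁻¹ * A := mul_le_mul' (hmaster k hk) le_rfl
      _ ≤ 4⁻¹ * A := mul_le_mul' (by
          rw [ENNReal.inv_le_inv]
          norm_num) le_rfl
      _ = A/4 := by rw [ENNReal.div_eq_inv_mul]
  -- the initial datum size
  have hμB_pos : 0 < volume (Metric.closedBall (0 : EuclideanSpace ℝ (Fin d)) 1) :=
    Metric.measure_closedBall_pos _ _ one_pos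
  have hμB_ne : volume (Metric.closedBall (0 : EuclideanSpace ℝ (Fin d)) 1) ≠ ∞ :=
    measure_closedBall_lt_top.ne
  set μB : ℝ≥0∞ := volume (Metric.closedBall (0 : EuclideanSpace ℝ (Fin d)) 1) with hμBdef
  set ε' : ℝ≥0∞ := min (min ((A/4)/mh) (((A/4)/Mh)/μB)) (min (A/μB) 1) with hε'def
  have hA4_0 : A/4 ≠ 0 := (ENNReal.div_pos hA0.ne' (by norm_num)).ne'
  have hε'0 : 0 < ε' := by
    refine lt_min (lt_min ?_ ?_) (lt_min ?_ zero_lt_one)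
    · exact ENNReal.div_pos hA4_0 hmh_ne
    · exact ENNReal.div_pos (ENNReal.div_pos hA4_0 hMh_ne).ne' hμB_ne
    · exact ENNReal.div_pos hA0.ne' hμB_ne
  have hε'_ne : ε' ≠ ∞ :=
    (lt_of_le_of_lt (le_trans (min_le_right _ _) (min_le_right _ _)) one_lt_top).ne
  set ε : ℝ := ε'.toReal with hεdef
  have hε_pos : 0 < ε := ENNReal.toReal_pos hε'0.ne' hε'_ne
  have hofReal_ε : ENNReal.ofReal ε = ε' := ENNReal.ofReal_toReal hε'_ne
  -- the initial datum
  set V₀ : EuclideanSpace ℝ (Fin d) → ℝ :=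
    fun y => Set.indicator (Metric.closedBall (0 : EuclideanSpace ℝ (Fin d)) 1) (fun _ => ε) y
    with hV₀def
  set U : EuclideanSpace ℝ (Fin d) → ℝ≥0∞ := fun y => ENNReal.ofReal (V₀ y) with hUdef
  have hUeq : U = Set.indicator (Metric.closedBall (0 : EuclideanSpace ℝ (Fin d)) 1)
      (fun _ => ε') := by
    funext y
    rw [hUdef]
    simp only
    by_cases h : y ∈ Metric.closedBall (0 : EuclideanSpace ℝ (Fin d)) 1
    · rw [hV₀def]; simp only
      rw [Set.indicator_of_mem h, Set.indicator_of_mem h, hofReal_ε]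
    · rw [hV₀def]; simp only
      rw [Set.indicator_of_notMem h, Set.indicator_of_notMem h, ENNReal.ofReal_zero]
  have hV₀meas : Measurable V₀ := measurable_const.indicator Metric.isClosed_closedBall.measurableSet
  have hUmeas : Measurable U := ENNReal.measurable_ofReal.comp hV₀meas
  have hU_le : ∀ y, U y ≤ ε' := by
    intro y
    rw [hUeq]
    by_cases h : y ∈ Metric.closedBall (0 : EuclideanSpace ℝ (Fin d)) 1
    · rw [Set.indicator_of_mem h]
    · rw [Set.indicator_of_notMem h]; exact zero_le
  set ν : ℝ≥0∞ := ∫⁻ y, U y with hνdef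
  have hν_eq : ν = ε' * μB := by
    rw [hνdef, hUeq, lintegral_indicator Metric.isClosed_closedBall.measurableSet,
      setLIntegral_const]
  have hν_le1 : Mh * ν ≤ A/4 := by
    have h1 : ν ≤ (A/4)/Mh := by
      rw [hν_eq]
      calc ε' * μB ≤ (((A/4)/Mh)/μB) * μB :=
            mul_le_mul' (le_trans (min_le_left _ _) (min_le_right _ _)) le_rfl
        _ ≤ (A/4)/Mh := by rw [mul_comm]; exact ENNReal.mul_div_le
    calc Mh * ν ≤ Mh * ((A/4)/Mh) := mul_le_mul' le_rfl h1
      _ ≤ A/4 := ENNReal.mul_div_le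
  have hν_leA : ν ≤ A := by
    rw [hν_eq]
    calc ε' * μB ≤ (A/μB) * μB :=
          mul_le_mul' (le_trans (min_le_right _ _) (min_le_left _ _)) le_rfl
      _ ≤ A := by rw [mul_comm]; exact ENNReal.mul_div_le
  have hmhε : mh * ε' ≤ A/4 := by
    calc mh * ε' ≤ mh * ((A/4)/mh) :=
          mul_le_mul' le_rfl (le_trans (min_le_left _ _) (min_le_left _ _))
      _ ≤ A/4 := ENNReal.mul_div_le
  have hm_le_mh : m ≤ mh := by rw [hmhdef]; exact le_self_add
  have hM_le_Mh : M ≤ Mh := by rw [hMhdef]; exact le_self_add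
  set F1 : ℝ≥0∞ := 2 * (mh * ν) with hF1def
  have hF1_ne : F1 ≠ ∞ := by
    rw [hF1def]
    refine ENNReal.mul_ne_top (by norm_num) (ENNReal.mul_ne_top hmh_ne ?_)
    rw [hν_eq]
    exact ENNReal.mul_ne_top hε'_ne hμB_ne
  -- the supersolution profile
  set FF : ℝ → ℝ≥0∞ := fun s => A * ENNReal.ofReal (min 1 (s ^ (-γ))) with hFFdef
  have hFF_le_A : ∀ s, FF s ≤ A := by
    intro s
    rw [hFFdef]
    calc A * ENNReal.ofReal (min 1 (s ^ (-γ)))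
        ≤ A * 1 := mul_le_mul' le_rfl (ENNReal.ofReal_le_one.mpr (min_le_left _ _))
      _ = A := mul_one A
  have hFF_ne : ∀ s, FF s ≠ ∞ := fun s => (lt_of_le_of_lt (hFF_le_A s)
    (lt_of_le_of_lt hA1 one_lt_top)).ne
  have hFF_pow : ∀ s : ℝ, 0 < s → ∀ p : ℝ, 0 ≤ p →
      FF s ^ p = A^p * ENNReal.ofReal (min 1 (s ^ (-(γ*p)))) := by
    intro s hs p hp
    rw [hFFdef]
    simp only
    rw [ENNReal.mul_rpow_of_nonneg _ _ hp,
      ENNReal.ofReal_rpow_of_nonneg (le_min zero_le_one (Real.rpow_nonneg hs.le _)) hp,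
      real_min_one_rpow (Real.rpow_nonneg hs.le _) hp, ← Real.rpow_mul hs.le, neg_mul]
  have hFF_small : ∀ t : ℝ, 0 < t → t ≤ 1 → FF t = A := by
    intro t ht ht1
    rw [hFFdef]
    simp only
    rw [min_eq_left (Real.one_le_rpow_of_pos_of_le_one_of_nonpos ht ht1
      (neg_nonpos.mpr hγ0.le)), ENNReal.ofReal_one, mul_one]
  have hFF_big : ∀ t : ℝ, 1 ≤ t → FF t = A * ENNReal.ofReal (t ^ (-γ)) := by
    intro t ht
    rw [hFFdef]
    simp only
    rw [min_eq_right (Real.rpow_le_one_of_one_le_of_nonpos ht (neg_nonpos.mpr hγ0.le))]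
  have hIηJ : ∀ T : ℝ, (∫⁻ s in Set.Ioo (0:ℝ) T, FF s ^ η) ≤ A ^ η * Jh := by
    intro T
    calc (∫⁻ s in Set.Ioo (0:ℝ) T, FF s ^ η)
        ≤ ∫⁻ s in Set.Ioo (0:ℝ) T, A^η * ENNReal.ofReal (min 1 (s ^ (-(γ*η)))) :=
          setLIntegral_mono' measurableSet_Ioo fun s hs => (hFF_pow s hs.1 η hη0.le).le
      _ = A^η * ∫⁻ s in Set.Ioo (0:ℝ) T, ENNReal.ofReal (min 1 (s ^ (-(γ*η)))) :=
          lintegral_const_mul' _ _ (lt_of_le_of_lt hAη_le1 one_lt_top).ne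
      _ ≤ A^η * J := mul_le_mul' le_rfl (lintegral_mono_set Set.Ioo_subset_Ioi_self)
      _ ≤ A^η * Jh := mul_le_mul' le_rfl (by rw [hJhdef]; exact le_self_add)
  -- auxiliary constant inequalities
  have hone_le_pow : ∀ k : ℕ, (1:ℝ≥0∞) ≤ B ^ k := fun k => one_le_pow_of_one_le' hB1 k
  have hB_le_B4 : B ≤ B^4 := by
    calc B = B * 1 := (mul_one _).symm
      _ ≤ B * B^3 := mul_le_mul' le_rfl (hone_le_pow 3)
      _ = B^4 := by ring
  have hB2_le_B4 : B^2 ≤ B^4 := by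
    calc B^2 = B^2 * 1 := (mul_one _).symm
      _ ≤ B^2 * B^2 := mul_le_mul' le_rfl (hone_le_pow 2)
      _ = B^4 := by ring
  have h2_16 : (2:ℝ≥0∞) * 16⁻¹ ≤ 4⁻¹ := by
    have h16 : (16:ℝ≥0∞) = 4 * 4 := by norm_num
    rw [h16, ENNReal.mul_inv (Or.inl (by norm_num)) (Or.inl (by norm_num)), ← mul_assoc]
    calc (2:ℝ≥0∞) * 4⁻¹ * 4⁻¹ ≤ 4 * 4⁻¹ * 4⁻¹ := by
          exact mul_le_mul' (mul_le_mul' (by norm_num) le_rfl) le_rfl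
      _ = 1 * 4⁻¹ := by rw [ENNReal.mul_inv_cancel (by norm_num) (by norm_num)]
      _ = 4⁻¹ := one_mul _
  have hC4 : c₂ * Mh * F1 * A ^ η * Jh ≤ A/4 := by
    have h1 : c₂ * Mh * mh * Jh ≤ B^4 := by
      calc c₂ * Mh * mh * Jh ≤ B * B * B * B :=
            mul_le_mul' (mul_le_mul' (mul_le_mul' hc₂_le hMh_le) hmh_le) hJh_le
        _ = B^4 := by ring
    calc c₂ * Mh * F1 * A ^ η * Jh = 2 * ((c₂ * Mh * mh * Jh) * A^η) * ν := by
          rw [hF1def]; ring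
      _ ≤ 2 * 16⁻¹ * A := mul_le_mul' (mul_le_mul' le_rfl (hmaster _ h1)) hν_leA
      _ ≤ 4⁻¹ * A := mul_le_mul' h2_16 le_rfl
      _ = A/4 := by rw [ENNReal.div_eq_inv_mul]
  have hC5 : c₂ * mh * A ^ (1+η) ≤ A/4 := by
    refine hfac (c₂ * mh) (le_trans ?_ hB2_le_B4)
    calc c₂ * mh ≤ B * B := mul_le_mul' hc₂_le hmh_le
      _ = B^2 := by ring
  have hC6 : mh * A ^ η * Jh ≤ 2⁻¹ := by
    calc mh * A^η * Jh = (mh * Jh) * A^η := by ring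
      _ ≤ 16⁻¹ := hmaster _ (le_trans (by
            calc mh * Jh ≤ B * B := mul_le_mul' hmh_le hJh_le
              _ = B^2 := by ring) hB2_le_B4)
      _ ≤ 2⁻¹ := by rw [ENNReal.inv_le_inv]; norm_num
  have hFFη_ne : ∀ s, FF s ^ η ≠ ∞ := fun s =>
    (lt_of_le_of_lt (le_trans (ENNReal.rpow_le_rpow (hFF_le_A s) hη0.le) hAη_le1)
      one_lt_top).ne
  -- Picard iterates
  have hPmeas : ∀ n, Measurable (Function.uncurry (picardIt d K η U n)) :=
    measurable_picardIt hK hUmeas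
  have hPsec : ∀ n (s : ℝ), Measurable (fun y => picardIt d K η U n s y) :=
    fun n s => (hPmeas n).comp measurable_prodMk_left
  -- the key inductive bound
  have key : ∀ n, ∀ t : ℝ, 0 < t →
      (∀ x, picardIt d K η U n t x ≤ FF t) ∧ (∫⁻ x, picardIt d K η U n t x ≤ F1) := by
    intro n
    induction n with
    | zero =>
      intro t ht
      refine ⟨fun x => zero_le, ?_⟩
      have h0 : (fun x : EuclideanSpace ℝ (Fin d) => picardIt d K η U 0 t x)
          = fun _ => (0:ℝ≥0∞) := rfl
      rw [h0, lintegral_zero]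
      exact zero_le
    | succ n IH =>
      intro t ht
      have hIHp : ∀ s, s ∈ Set.Ioo (0:ℝ) t → ∀ y, picardIt d K η U n s y ≤ FF s :=
        fun s hs y => (IH s hs.1).1 y
      have hIH1 : ∀ s, s ∈ Set.Ioo (0:ℝ) t → (∫⁻ y, picardIt d K η U n s y) ≤ F1 :=
        fun s hs => (IH s hs.1).2
      have hLa : ∀ x, (∫⁻ y, K t (x - y) * U y) ≤ mh * ε' := by
        intro x
        calc (∫⁻ y, K t (x - y) * U y)
            ≤ ∫⁻ y, K t (x - y) * ε' :=
              lintegral_mono fun y => mul_le_mul' le_rfl (hU_le y)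
          _ = (∫⁻ y, K t (x - y)) * ε' :=
              lintegral_mul_const _ ((hKsec t).comp (measurable_const.sub measurable_id))
          _ = m * ε' := by rw [hKmass_shift t ht x]
          _ ≤ mh * ε' := mul_le_mul' hm_le_mh le_rfl
      have hLb : ∀ x, (∫⁻ y, K t (x - y) * U y) ≤ ENNReal.ofReal (t ^ (-γ)) * (Mh * ν) := by
        intro x
        calc (∫⁻ y, K t (x - y) * U y)
            ≤ ∫⁻ y, (ENNReal.ofReal (t ^ (-γ)) * M) * U y :=
              lintegral_mono_ae ((hsup_shift t ht x).mono fun y hy => mul_le_mul' hy le_rfl)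
          _ = (ENNReal.ofReal (t ^ (-γ)) * M) * ν :=
              lintegral_const_mul' _ _ (ENNReal.mul_ne_top ENNReal.ofReal_ne_top hM_ne)
          _ ≤ ENNReal.ofReal (t ^ (-γ)) * (Mh * ν) := by
              rw [mul_assoc]
              exact mul_le_mul' le_rfl (mul_le_mul' hM_le_Mh le_rfl)
      have hDa : ∀ x, ∀ s ∈ Set.Ioo (0:ℝ) t,
          (∫⁻ y, K (t - s) (x - y) * picardIt d K η U n s y ^ (1+η)) ≤ mh * FF s ^ (1+η) := by
        intro x s hs
        have hts : 0 < t - s := sub_pos.mpr hs.2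
        calc (∫⁻ y, K (t - s) (x - y) * picardIt d K η U n s y ^ (1+η))
            ≤ ∫⁻ y, K (t - s) (x - y) * FF s ^ (1+η) :=
              lintegral_mono fun y => mul_le_mul' le_rfl
                (ENNReal.rpow_le_rpow (hIHp s hs y) hη1)
          _ = (∫⁻ y, K (t - s) (x - y)) * FF s ^ (1+η) :=
              lintegral_mul_const _ ((hKsec (t-s)).comp (measurable_const.sub measurable_id))
          _ = m * FF s ^ (1+η) := by rw [hKmass_shift (t-s) hts x]
          _ ≤ mh * FF s ^ (1+η) := mul_le_mul' hm_le_mh le_rfl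
      have hDb : ∀ x, ∀ s ∈ Set.Ioo (0:ℝ) t,
          (∫⁻ y, K (t - s) (x - y) * picardIt d K η U n s y ^ (1+η))
            ≤ ENNReal.ofReal ((t - s) ^ (-γ)) * (Mh * (FF s ^ η * F1)) := by
        intro x s hs
        have hts : 0 < t - s := sub_pos.mpr hs.2
        calc (∫⁻ y, K (t - s) (x - y) * picardIt d K η U n s y ^ (1+η))
            ≤ ∫⁻ y, (ENNReal.ofReal ((t-s) ^ (-γ)) * M)
                * (FF s ^ η * picardIt d K η U n s y) :=
              lintegral_mono_ae ((hsup_shift (t-s) hts x).mono fun y hy =>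
                mul_le_mul' hy (ennreal_rpow_one_add_le hη0.le (hIHp s hs y)))
          _ = (ENNReal.ofReal ((t-s) ^ (-γ)) * M)
                * (FF s ^ η * ∫⁻ y, picardIt d K η U n s y) := by
              rw [lintegral_const_mul' _ _ (ENNReal.mul_ne_top ENNReal.ofReal_ne_top hM_ne),
                lintegral_const_mul' _ _ (hFFη_ne s)]
          _ ≤ ENNReal.ofReal ((t-s) ^ (-γ)) * (Mh * (FF s ^ η * F1)) := by
              rw [mul_assoc]
              exact mul_le_mul' le_rfl (mul_le_mul' hM_le_Mh
                (mul_le_mul' le_rfl (hIH1 s hs)))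
      constructor
      · -- pointwise bound
        intro x
        rw [picardIt_succ]
        rcases le_or_gt t 1 with ht1 | ht1
        · have hD : (∫⁻ s in Set.Ioo (0:ℝ) t,
              ∫⁻ y, K (t - s) (x - y) * picardIt d K η U n s y ^ (1+η))
              ≤ mh * A ^ (1+η) := by
            calc (∫⁻ s in Set.Ioo (0:ℝ) t,
                ∫⁻ y, K (t - s) (x - y) * picardIt d K η U n s y ^ (1+η))
                ≤ ∫⁻ _ in Set.Ioo (0:ℝ) t, mh * A ^ (1+η) :=
                  setLIntegral_mono' measurableSet_Ioo fun s hs =>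
                    (hDa x s hs).trans (mul_le_mul' le_rfl
                      (ENNReal.rpow_le_rpow (hFF_le_A s) hη1))
              _ = (mh * A ^ (1+η)) * volume (Set.Ioo (0:ℝ) t) := setLIntegral_const _ _
              _ = (mh * A ^ (1+η)) * ENNReal.ofReal t := by rw [Real.volume_Ioo, sub_zero]
              _ ≤ (mh * A ^ (1+η)) * 1 := mul_le_mul' le_rfl (ENNReal.ofReal_le_one.mpr ht1)
              _ = mh * A ^ (1+η) := mul_one _
          have hC2 : mh * A ^ (1+η) ≤ A/4 := hfac mh (le_trans hmh_le hB_le_B4)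
          calc (∫⁻ y, K t (x - y) * U y) + ∫⁻ s in Set.Ioo (0:ℝ) t,
              ∫⁻ y, K (t - s) (x - y) * picardIt d K η U n s y ^ (1+η)
              ≤ A/4 + A/4 := add_le_add ((hLa x).trans hmhε) (hD.trans hC2)
            _ ≤ A/4 + A/4 + A/4 := le_self_add
            _ ≤ A := ennreal_three_quarters A
            _ = FF t := (hFF_small t ht ht1).symm
        · -- 1 < t
          have ht1' : (1:ℝ) ≤ t := ht1.le
          have hhalf : (0:ℝ) < t/2 := by linarith
          have hsplit : Set.Ioo (0:ℝ) t = Set.Ioo 0 (t/2) ∪ Set.Ico (t/2) t := by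
            ext s
            simp only [Set.mem_Ioo, Set.mem_Ico, Set.mem_union]
            constructor
            · rintro ⟨h1, h2⟩
              rcases lt_or_ge s (t/2) with h | h
              · exact Or.inl ⟨h1, h⟩
              · exact Or.inr ⟨h, h2⟩
            · rintro (⟨h1, h2⟩ | ⟨h1, h2⟩)
              · exact ⟨h1, by linarith⟩
              · exact ⟨by linarith, h2⟩
          have hdisj : Disjoint (Set.Ioo (0:ℝ) (t/2)) (Set.Ico (t/2) t) := by
            rw [Set.disjoint_left]
            rintro s ⟨_, h2⟩ ⟨h3, _⟩
            exact absurd h2 (not_lt.mpr h3)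
          rw [hsplit, lintegral_union measurableSet_Ico hdisj]
          have hkb : ENNReal.ofReal ((t/2) ^ (-γ)) ≤ ENNReal.ofReal (t ^ (-γ)) * c₂ := by
            have h2γ : (t/2:ℝ) ^ (-γ) = t ^ (-γ) * 2 ^ γ := by
              rw [Real.div_rpow ht.le (by norm_num : (0:ℝ) ≤ 2), div_eq_mul_inv,
                ← Real.rpow_neg (by norm_num : (0:ℝ) ≤ 2), neg_neg]
            calc ENNReal.ofReal ((t/2) ^ (-γ))
                = ENNReal.ofReal (t ^ (-γ)) * ENNReal.ofReal (2 ^ γ) := by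
                  rw [h2γ, ENNReal.ofReal_mul (Real.rpow_nonneg ht.le _)]
              _ ≤ ENNReal.ofReal (t ^ (-γ)) * c₂ := by
                  refine mul_le_mul' le_rfl ?_
                  rw [hc₂def]
                  exact ENNReal.ofReal_le_ofReal (Real.rpow_le_rpow_of_exponent_le one_le_two
                    (by nlinarith [mul_pos hγ0 hη0]))
          have hp1 : (∫⁻ s in Set.Ioo (0:ℝ) (t/2),
              ∫⁻ y, K (t - s) (x - y) * picardIt d K η U n s y ^ (1+η))
              ≤ ENNReal.ofReal (t ^ (-γ)) * (A/4) := by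
            calc (∫⁻ s in Set.Ioo (0:ℝ) (t/2),
                ∫⁻ y, K (t - s) (x - y) * picardIt d K η U n s y ^ (1+η))
                ≤ ∫⁻ s in Set.Ioo (0:ℝ) (t/2),
                    (ENNReal.ofReal ((t/2) ^ (-γ)) * Mh * F1) * FF s ^ η := by
                  refine setLIntegral_mono' measurableSet_Ioo fun s hs => ?_
                  have hs' : s ∈ Set.Ioo (0:ℝ) t := ⟨hs.1, by linarith [hs.2]⟩
                  refine le_trans ((hDb x s hs').trans (mul_le_mul' (ENNReal.ofReal_le_ofReal
                    (Real.rpow_le_rpow_of_nonpos hhalf (by linarith [hs.2])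
                      (neg_nonpos.mpr hγ0.le))) le_rfl)) ?_
                  exact le_of_eq (by ring)
              _ = (ENNReal.ofReal ((t/2) ^ (-γ)) * Mh * F1)
                    * ∫⁻ s in Set.Ioo (0:ℝ) (t/2), FF s ^ η :=
                  lintegral_const_mul' _ _ (ENNReal.mul_ne_top
                    (ENNReal.mul_ne_top ENNReal.ofReal_ne_top hMh_ne) hF1_ne)
              _ ≤ ((ENNReal.ofReal (t ^ (-γ)) * c₂) * Mh * F1) * (A^η * Jh) :=
                  mul_le_mul' (mul_le_mul' (mul_le_mul' hkb le_rfl) le_rfl) (hIηJ (t/2))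
              _ = ENNReal.ofReal (t ^ (-γ)) * (c₂ * Mh * F1 * A^η * Jh) := by ring
              _ ≤ ENNReal.ofReal (t ^ (-γ)) * (A/4) := mul_le_mul' le_rfl hC4
          have hp2 : (∫⁻ s in Set.Ico (t/2) t,
              ∫⁻ y, K (t - s) (x - y) * picardIt d K η U n s y ^ (1+η))
              ≤ ENNReal.ofReal (t ^ (-γ)) * (A/4) := by
            have hofEq : ENNReal.ofReal ((t/2) ^ (-(γ*(1+η)))) * ENNReal.ofReal (t/2)
                = ENNReal.ofReal ((t/2) ^ (-(γ*(1+η)) + 1)) := by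
              rw [← ENNReal.ofReal_mul (Real.rpow_nonneg hhalf.le _)]
              congr 1
              nth_rewrite 2 [show (t/2 : ℝ) = (t/2) ^ (1:ℝ) by rw [Real.rpow_one]]
              rw [← Real.rpow_add hhalf]
            have hbnd : ENNReal.ofReal ((t/2) ^ (-(γ*(1+η)) + 1))
                ≤ c₂ * ENNReal.ofReal (t ^ (-γ)) := by
              have hγexp : γ*(1+η) = γ + γ*η := by ring
              have h1 : (t/2:ℝ) ^ (-(γ*(1+η)) + 1)
                  = t ^ (-(γ*(1+η)) + 1) * 2 ^ (-(-(γ*(1+η)) + 1)) := by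
                rw [Real.div_rpow ht.le (by norm_num : (0:ℝ) ≤ 2), div_eq_mul_inv,
                  ← Real.rpow_neg (by norm_num : (0:ℝ) ≤ 2)]
              have h2 : (t:ℝ) ^ (-(γ*(1+η)) + 1) ≤ t ^ (-γ) :=
                Real.rpow_le_rpow_of_exponent_le ht1' (by linarith)
              have h3 : (2:ℝ) ^ (-(-(γ*(1+η)) + 1)) ≤ 2 ^ (γ*(1+η)) :=
                Real.rpow_le_rpow_of_exponent_le one_le_two (by linarith)
              calc ENNReal.ofReal ((t/2) ^ (-(γ*(1+η)) + 1))
                  ≤ ENNReal.ofReal (2 ^ (γ*(1+η)) * t ^ (-γ)) := by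
                    refine ENNReal.ofReal_le_ofReal ?_
                    rw [h1]
                    calc t ^ (-(γ*(1+η)) + 1) * 2 ^ (-(-(γ*(1+η)) + 1))
                        ≤ t ^ (-γ) * 2 ^ (γ*(1+η)) :=
                          mul_le_mul h2 h3 (Real.rpow_nonneg (by norm_num) _)
                            (Real.rpow_nonneg ht.le _)
                      _ = 2 ^ (γ*(1+η)) * t ^ (-γ) := mul_comm _ _
                _ = c₂ * ENNReal.ofReal (t ^ (-γ)) := by
                    rw [hc₂def, ENNReal.ofReal_mul (Real.rpow_nonneg (by norm_num) _)]
            calc (∫⁻ s in Set.Ico (t/2) t,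
                ∫⁻ y, K (t - s) (x - y) * picardIt d K η U n s y ^ (1+η))
                ≤ ∫⁻ _ in Set.Ico (t/2) t,
                    mh * (A^(1+η) * ENNReal.ofReal ((t/2) ^ (-(γ*(1+η))))) := by
                  refine setLIntegral_mono' measurableSet_Ico fun s hs => ?_
                  have hs' : s ∈ Set.Ioo (0:ℝ) t := ⟨lt_of_lt_of_le hhalf hs.1, hs.2⟩
                  refine (hDa x s hs').trans (mul_le_mul' le_rfl ?_)
                  rw [hFF_pow s hs'.1 (1+η) hη1]
                  refine mul_le_mul' le_rfl (ENNReal.ofReal_le_ofReal ?_)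
                  calc min 1 (s ^ (-(γ*(1+η)))) ≤ s ^ (-(γ*(1+η))) := min_le_right _ _
                    _ ≤ (t/2) ^ (-(γ*(1+η))) :=
                      Real.rpow_le_rpow_of_nonpos hhalf hs.1
                        (neg_nonpos.mpr (by positivity))
              _ = mh * (A^(1+η) * ENNReal.ofReal ((t/2) ^ (-(γ*(1+η)))))
                    * volume (Set.Ico (t/2) t) := setLIntegral_const _ _
              _ = mh * A^(1+η)
                    * (ENNReal.ofReal ((t/2) ^ (-(γ*(1+η)))) * ENNReal.ofReal (t/2)) := by
                  rw [Real.volume_Ico, _root_.sub_half]; ring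
              _ ≤ mh * A^(1+η) * (c₂ * ENNReal.ofReal (t ^ (-γ))) := by
                  rw [hofEq]
                  exact mul_le_mul' le_rfl hbnd
              _ = ENNReal.ofReal (t ^ (-γ)) * (c₂ * mh * A^(1+η)) := by ring
              _ ≤ ENNReal.ofReal (t ^ (-γ)) * (A/4) := mul_le_mul' le_rfl hC5
          calc (∫⁻ y, K t (x - y) * U y)
              + ((∫⁻ s in Set.Ioo (0:ℝ) (t/2),
                  ∫⁻ y, K (t - s) (x - y) * picardIt d K η U n s y ^ (1+η))
                + ∫⁻ s in Set.Ico (t/2) t,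
                  ∫⁻ y, K (t - s) (x - y) * picardIt d K η U n s y ^ (1+η))
              ≤ ENNReal.ofReal (t ^ (-γ)) * (Mh * ν)
                + (ENNReal.ofReal (t ^ (-γ)) * (A/4) + ENNReal.ofReal (t ^ (-γ)) * (A/4)) :=
                add_le_add (hLb x) (add_le_add hp1 hp2)
            _ ≤ ENNReal.ofReal (t ^ (-γ)) * (A/4)
                + (ENNReal.ofReal (t ^ (-γ)) * (A/4) + ENNReal.ofReal (t ^ (-γ)) * (A/4)) :=
                add_le_add (mul_le_mul' le_rfl hν_le1) le_rfl
            _ = ENNReal.ofReal (t ^ (-γ)) * (A/4 + A/4 + A/4) := by ring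
            _ ≤ ENNReal.ofReal (t ^ (-γ)) * A :=
                mul_le_mul' le_rfl (ennreal_three_quarters A)
            _ = FF t := by rw [hFF_big t ht1', mul_comm]
      · -- L1 bound
        have hLmeas : Measurable fun x : EuclideanSpace ℝ (Fin d) =>
            ∫⁻ y, K t (x - y) * U y := by
          apply Measurable.lintegral_prod_right'
            (f := fun q : EuclideanSpace ℝ (Fin d) × EuclideanSpace ℝ (Fin d) =>
              K t (q.1 - q.2) * U q.2)
          exact ((hKsec t).comp (measurable_fst.sub measurable_snd)).mul
            (hUmeas.comp measurable_snd)
        have hDmeas_xs : Measurable (fun q : EuclideanSpace ℝ (Fin d) × ℝ =>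
            ∫⁻ y, K (t - q.2) (q.1 - y) * picardIt d K η U n q.2 y ^ (1+η)) := by
          apply Measurable.lintegral_prod_right'
            (f := fun r : (EuclideanSpace ℝ (Fin d) × ℝ) × EuclideanSpace ℝ (Fin d) =>
              K (t - r.1.2) (r.1.1 - r.2) * picardIt d K η U n r.1.2 r.2 ^ (1+η))
          refine (hK.comp ((measurable_const.sub measurable_fst.snd).prodMk
            (measurable_fst.fst.sub measurable_snd))).mul ?_
          exact (ENNReal.continuous_rpow_const.measurable).comp
            ((hPmeas n).comp ((measurable_fst.snd).prodMk measurable_snd))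
        simp only [picardIt_succ]
        rw [lintegral_add_left hLmeas]
        have hL1 : (∫⁻ x, ∫⁻ y, K t (x - y) * U y) ≤ mh * ν := by
          rw [lintegral_lintegral_swap
            ((((hKsec t).comp (measurable_fst.sub measurable_snd)).mul
              (hUmeas.comp measurable_snd)).aemeasurable)]
          calc (∫⁻ y, ∫⁻ x, K t (x - y) * U y)
              = ∫⁻ y, (∫⁻ x, K t (x - y)) * U y :=
                lintegral_congr fun y =>
                  lintegral_mul_const _ ((hKsec t).comp (measurable_id.sub measurable_const))
            _ = ∫⁻ y, m * U y := lintegral_congr fun y => by rw [hKmass_shift' t ht y]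
            _ = m * ν := lintegral_const_mul' _ _ hm_ne
            _ ≤ mh * ν := mul_le_mul' hm_le_mh le_rfl
        have hD1 : (∫⁻ x, ∫⁻ s in Set.Ioo (0:ℝ) t,
            ∫⁻ y, K (t - s) (x - y) * picardIt d K η U n s y ^ (1+η)) ≤ mh * ν := by
          rw [lintegral_lintegral_swap hDmeas_xs.aemeasurable]
          have hbX : ∀ s ∈ Set.Ioo (0:ℝ) t,
              (∫⁻ x, ∫⁻ y, K (t - s) (x - y) * picardIt d K η U n s y ^ (1+η))
                ≤ (mh * F1) * FF s ^ η := by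
            intro s hs
            have hts : 0 < t - s := sub_pos.mpr hs.2
            rw [lintegral_lintegral_swap
              ((((hKsec (t-s)).comp (measurable_fst.sub measurable_snd)).mul
                ((ENNReal.continuous_rpow_const.measurable).comp
                  ((hPsec n s).comp measurable_snd))).aemeasurable)]
            calc (∫⁻ y, ∫⁻ x, K (t - s) (x - y) * picardIt d K η U n s y ^ (1+η))
                = ∫⁻ y, m * picardIt d K η U n s y ^ (1+η) :=
                  lintegral_congr fun y => by
                    have hmy : Measurable fun x : EuclideanSpace ℝ (Fin d) =>
                        K (t - s) (x - y) :=
                      (hKsec (t-s)).comp (measurable_id.sub measurable_const)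
                    rw [lintegral_mul_const _ hmy, hKmass_shift' (t-s) hts y]
              _ = m * ∫⁻ y, picardIt d K η U n s y ^ (1+η) :=
                  lintegral_const_mul' _ _ hm_ne
              _ ≤ mh * (FF s ^ η * F1) := by
                  refine mul_le_mul' hm_le_mh ?_
                  calc (∫⁻ y, picardIt d K η U n s y ^ (1+η))
                      ≤ ∫⁻ y, FF s ^ η * picardIt d K η U n s y :=
                        lintegral_mono fun y =>
                          ennreal_rpow_one_add_le hη0.le (hIHp s hs y)
                    _ = FF s ^ η * ∫⁻ y, picardIt d K η U n s y :=
                        lintegral_const_mul' _ _ (hFFη_ne s)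
                    _ ≤ FF s ^ η * F1 := mul_le_mul' le_rfl (hIH1 s hs)
              _ = (mh * F1) * FF s ^ η := by ring
          calc (∫⁻ s in Set.Ioo (0:ℝ) t,
              ∫⁻ x, ∫⁻ y, K (t - s) (x - y) * picardIt d K η U n s y ^ (1+η))
              ≤ ∫⁻ s in Set.Ioo (0:ℝ) t, (mh * F1) * FF s ^ η :=
                setLIntegral_mono' measurableSet_Ioo hbX
            _ = (mh * F1) * ∫⁻ s in Set.Ioo (0:ℝ) t, FF s ^ η :=
                lintegral_const_mul' _ _ (ENNReal.mul_ne_top hmh_ne hF1_ne)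
            _ ≤ (mh * F1) * (A^η * Jh) := mul_le_mul' le_rfl (hIηJ t)
            _ = F1 * (mh * A^η * Jh) := by ring
            _ ≤ F1 * 2⁻¹ := mul_le_mul' le_rfl hC6
            _ = mh * ν := by
                rw [hF1def, mul_comm (2:ℝ≥0∞) _, mul_assoc,
                  ENNReal.mul_inv_cancel (by norm_num) (by norm_num), mul_one]
        calc (∫⁻ x, ∫⁻ y, K t (x - y) * U y)
            + ∫⁻ x, ∫⁻ s in Set.Ioo (0:ℝ) t,
                ∫⁻ y, K (t - s) (x - y) * picardIt d K η U n s y ^ (1+η)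
            ≤ mh * ν + mh * ν := add_le_add hL1 hD1
          _ = F1 := by rw [hF1def, two_mul]
  -- the solution
  set W : ℝ → EuclideanSpace ℝ (Fin d) → ℝ≥0∞ :=
    fun t x => ⨆ n, picardIt d K η U n t x with hWdef
  have hWmeas : Measurable (Function.uncurry W) := by
    have h0 : Function.uncurry W
        = fun p => ⨆ n, Function.uncurry (picardIt d K η U n) p := rfl
    rw [h0]
    exact Measurable.iSup fun n => hPmeas n
  have hWle : ∀ t : ℝ, 0 < t → ∀ x, W t x ≤ A := fun t ht x =>
    (iSup_le fun n => (key n t ht).1 x).trans (hFF_le_A t)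
  have hW_ne : ∀ t : ℝ, 0 < t → ∀ x, W t x ≠ ∞ := fun t ht x =>
    (lt_of_le_of_lt (hWle t ht x) (lt_of_le_of_lt hA1 one_lt_top)).ne
  have hWfix : ∀ t x, W t x = (∫⁻ y, K t (x - y) * U y)
      + ∫⁻ s in Set.Ioo (0:ℝ) t, ∫⁻ y, K (t-s) (x-y) * W s y ^ (1+η) :=
    fun t x => picardIt_iSup_eq hK hη0 hUmeas t x
  set V : ℝ → EuclideanSpace ℝ (Fin d) → ℝ :=
    fun s x => if 0 < s then (W s x).toReal else 0 with hVdef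
  have hVmeas : Measurable (Function.uncurry V) := by
    have h0 : Function.uncurry V = fun p : ℝ × EuclideanSpace ℝ (Fin d) =>
        if 0 < p.1 then (Function.uncurry W p).toReal else 0 := rfl
    rw [h0]
    exact Measurable.ite (measurableSet_lt measurable_const measurable_fst)
      (ENNReal.measurable_toReal.comp hWmeas) measurable_const
  have hVnonneg : ∀ t x, 0 ≤ V t x := by
    intro t x
    rw [hVdef]
    simp only
    split
    · exact ENNReal.toReal_nonneg
    · exact le_rfl
  have hofRealV : ∀ s : ℝ, 0 < s → ∀ x, ENNReal.ofReal (V s x) = W s x := by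
    intro s hs x
    rw [hVdef]
    simp only [if_pos hs]
    exact ENNReal.ofReal_toReal (hW_ne s hs x)
  -- conclusion
  refine ⟨V₀, hV₀meas, fun x => ?_, ⟨ε, fun x => ?_⟩, ?_, ?_, V, hVmeas, hVnonneg, ?_, ?_⟩
  · -- nonneg
    simp only [hV₀def]
    exact Set.indicator_nonneg (fun _ _ => hε_pos.le) x
  · -- bounded
    simp only [hV₀def]
    by_cases h : x ∈ Metric.closedBall (0 : EuclideanSpace ℝ (Fin d)) 1
    · rw [Set.indicator_of_mem h]
    · rw [Set.indicator_of_notMem h]; exact hε_pos.le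
  · -- compact support
    exact HasCompactSupport.intro (isCompact_closedBall _ _)
      (fun x hx => Set.indicator_of_notMem hx _)
  · -- nontrivial
    intro hcontra
    have hU0 : U =ᵐ[volume] 0 := by
      refine hcontra.mono fun y hy => ?_
      rw [hUdef]
      simp only
      rw [show V₀ y = 0 from hy, ENNReal.ofReal_zero]
      rfl
    have h0 : ν = 0 := by
      rw [hνdef, lintegral_congr_ae hU0]
      simp
    rw [hν_eq] at h0
    rcases mul_eq_zero.mp h0 with h | h
    · exact hε'0.ne' h
    · exact hμB_pos.ne' h
  · -- the mild equation
    intro t ht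
    refine Filter.Eventually.of_forall fun x => ?_
    rw [hofRealV t ht x, hWfix t x]
    congr 1
    refine setLIntegral_congr_fun measurableSet_Ioo
      (fun s hs => ?_)
    refine lintegral_congr fun y => ?_
    rw [hofRealV s hs.1 y]
  · -- essential boundedness
    intro t ht
    have hb : ∀ᵐ x : EuclideanSpace ℝ (Fin d) ∂volume, ‖V t x‖ ≤ A.toReal := by
      refine Filter.Eventually.of_forall fun x => ?_
      rw [Real.norm_eq_abs, abs_of_nonneg (hVnonneg t x)]
      calc V t x = (W t x).toReal := by rw [hVdef]; simp only [if_pos ht]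
        _ ≤ A.toReal := ENNReal.toReal_mono hA_ne (hWle t ht x)
    refine (lt_of_le_of_lt (eLpNorm_le_of_ae_bound hb) ?_).ne
    refine ENNReal.mul_lt_top ?_ ENNReal.ofReal_lt_top
    simp
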